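/- Let E be a Polish space with metric d, X a random element in E, and C ⊆ E a closed set such that P(X ∈ C_ε) > 0 for every ε > 0, where C_ε := {x ∈ E : d(C,x) < ε}. Define T(x) := d(C,x), and for each n ≥ 1 let ξ^n be a [0,∞)-valued random variable whose law is given by P(ξ^n ∈ A) = P(T(X) ∈ A and T(X) < 1/n) / P(T(X) < 1/n) for Borel A ⊆ [0,∞). Then: (a) the sequence (ξ^n) satisfies (B1) and (B2) with z0 = 0; (b) for any regular conditional probability p of X given T(X) and any bounded continuous f : E → ℝ, E[∫_E f(x) p(dx, ξ^n)] = E[f(X) | X ∈ C_{1/n}]; consequently, if the conditional laws P(X ∈ · | X ∈ C_{1/n}) converge weakly to a probability measure ν, then ν is the value of the conditional distribution of X to the event {T(X) = 0} along (ξ^n). -/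

import Mathlib

open MeasureTheory Filter Topology BoundedContinuousFunction

/-- A regular conditional probability of `X` given `ξ`:
(R1) each `p z` is a probability measure, (R2) `z ↦ p z A` is measurable,
(R3) the disintegration identity holds. -/
structure IsRCP {Ω E F : Type*} [MeasurableSpace Ω] [MeasurableSpace E] [MeasurableSpace F]
    (P : Measure Ω) (X : Ω → E) (ξ : Ω → F) (p : F → Measure E) : Prop where
  isProb : ∀ z : F, IsProbabilityMeasure (p z)
  meas : ∀ A : Set E, MeasurableSet A → Measurable fun z => p z A
  disint : ∀ (A : Set E) (B : Set F), MeasurableSet A → MeasurableSet B →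
    P {ω | X ω ∈ A ∧ ξ ω ∈ B} = ∫⁻ z in B, p z A ∂(P.map ξ)

open ProbabilityTheory

/-- Key disintegration lemma for integrals of bounded continuous functions. -/
lemma rcp_setIntegral {Ω E : Type*} [MeasurableSpace Ω] [MetricSpace E] [PolishSpace E]
    [MeasurableSpace E] [BorelSpace E]
    (P : Measure Ω) [IsProbabilityMeasure P] (X : Ω → E) (hX : Measurable X)
    (T : Ω → ℝ) (hT : Measurable T)
    (p : ℝ → Measure E) (hrcp : IsRCP P X T p)
    (B : Set ℝ) (hB : MeasurableSet B) (f : E →ᵇ ℝ) :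
    ∫ z in B, (∫ x, f x ∂(p z)) ∂(P.map T) = ∫ ω in T ⁻¹' B, f (X ω) ∂P := by
  haveI hpprob : ∀ z, IsProbabilityMeasure (p z) := hrcp.isProb
  have hpmeas : Measurable p :=
    Measure.measurable_of_measurable_coe p (fun s hs => hrcp.meas s hs)
  set κ : Kernel ℝ E := ⟨p, hpmeas⟩ with hκ
  haveI : IsMarkovKernel κ := ⟨fun z => hpprob z⟩
  haveI : IsProbabilityMeasure (P.map T) := Measure.isProbabilityMeasure_map hT.aemeasurable
  set μB : Measure ℝ := (P.map T).restrict B with hμB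
  haveI : IsFiniteMeasure μB := inferInstance
  have hint : Integrable (fun zx : ℝ × E => f zx.2) (μB ⊗ₘ κ) := by
    exact (f.compContinuous (ContinuousMap.snd (α := ℝ) (β := E))).integrable _
  have h1 : ∫ z in B, (∫ x, f x ∂(p z)) ∂(P.map T) = ∫ zx, f zx.2 ∂(μB ⊗ₘ κ) := by
    rw [Measure.integral_compProd hint]
    rfl
  have h2 : (μB ⊗ₘ κ).snd = (P.restrict (T ⁻¹' B)).map X := by
    ext A hA
    rw [Measure.snd_apply hA, Measure.compProd_apply (measurable_snd hA)]
    have : (fun z => κ z (Prod.mk z ⁻¹' (Prod.snd ⁻¹' A))) = fun z => p z A := rfl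
    rw [this]
    have h3 : ∫⁻ z, p z A ∂μB = ∫⁻ z in B, p z A ∂(P.map T) := rfl
    rw [h3, ← hrcp.disint A B hA hB, Measure.map_apply hX hA,
      Measure.restrict_apply (hX hA)]
    rfl
  have h4 : ∫ zx, f zx.2 ∂(μB ⊗ₘ κ) = ∫ x, f x ∂((μB ⊗ₘ κ).snd) := by
    rw [Measure.snd, integral_map measurable_snd.aemeasurable
      f.continuous.measurable.aestronglyMeasurable]
  rw [h1, h4, h2, integral_map hX.aemeasurable f.continuous.measurable.aestronglyMeasurable]

example : True := trivial

/-- The law of `ξⁿ`: the law `μT` of `T(X)` conditioned on the event `{T(X) < 1/n}`. -/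
noncomputable def xiLaw (μT : Measure ℝ) (n : ℕ) : Measure ℝ :=
  (μT (Set.Iio (1 / (n : ℝ))))⁻¹ • μT.restrict (Set.Iio (1 / (n : ℝ)))

/-- The conditional law `P(X ∈ · | X ∈ C_ε)` where `C_ε = {x : d(C,x) < ε}`. -/
noncomputable def condLaw {Ω E : Type*} [MeasurableSpace Ω] [MeasurableSpace E]
    [MetricSpace E] (P : Measure Ω) (X : Ω → E) (C : Set E) (ε : ℝ) : Measure E :=
  (P {ω | Metric.infDist (X ω) C < ε})⁻¹ •
    (P.map X).restrict {x | Metric.infDist x C < ε}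

/-- For a closed set `C` in a Polish space `E` with
`P(X ∈ C_ε) > 0` for all `ε > 0`, where `C_ε = {x : d(C,x) < ε}` and `T(x) := d(C,x)`:
(a) the random variables `ξⁿ` with laws `xiLaw` satisfy (B1) and (B2) with `z0 = 0`;
(b) `E[∫ f(x) p(dx, ξⁿ)] = E[f(X) | X ∈ C_{1/n}]` for any regular conditional probability
`p` of `X` given `T(X)`;
(c) consequently, if `P(X ∈ · | X ∈ C_{1/n})` converges weakly to `ν`, then `ν` is the
value of the conditional distribution of `X` to the event `{T(X) = 0}` along `(ξⁿ)`. -/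
theorem stmt3 {Ω E : Type*} [MeasurableSpace Ω]
    [MetricSpace E] [PolishSpace E] [MeasurableSpace E] [BorelSpace E]
    (P : Measure Ω) [IsProbabilityMeasure P]
    (X : Ω → E) (hX : Measurable X)
    (C : Set E) (hC : IsClosed C)
    (hCpos : ∀ ε : ℝ, 0 < ε → 0 < P {ω | Metric.infDist (X ω) C < ε}) :
    -- (a) (B1): absolute continuity of the law of `ξⁿ` w.r.t. the law of `T(X)`
    (∀ n : ℕ, 1 ≤ n →
        xiLaw (P.map fun ω => Metric.infDist (X ω) C) n ≪
          (P.map fun ω => Metric.infDist (X ω) C)) ∧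
    -- (a) (B2): `ξⁿ → z0 = 0` in distribution
    (∀ f : ℝ →ᵇ ℝ,
        Tendsto (fun n => ∫ z, f z ∂(xiLaw (P.map fun ω => Metric.infDist (X ω) C) n))
          atTop (𝓝 (f 0))) ∧
    -- (b) `E[∫ f(x) p(dx, ξⁿ)] = E[f(X) | X ∈ C_{1/n}]`
    (∀ p : ℝ → Measure E,
        IsRCP P X (fun ω => Metric.infDist (X ω) C) p →
        ∀ n : ℕ, 1 ≤ n → ∀ f : E →ᵇ ℝ,
          ∫ z, (∫ x, f x ∂(p z)) ∂(xiLaw (P.map fun ω => Metric.infDist (X ω) C) n) =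
            (∫ ω in {ω | Metric.infDist (X ω) C < 1 / (n : ℝ)}, f (X ω) ∂P) /
              (P {ω | Metric.infDist (X ω) C < 1 / (n : ℝ)}).toReal) ∧
    -- (c) weak convergence of the conditional laws gives the value along `(ξⁿ)`
    (∀ ν : Measure E, IsProbabilityMeasure ν →
        (∀ f : E →ᵇ ℝ,
          Tendsto (fun n => ∫ x, f x ∂(condLaw P X C (1 / (n : ℝ)))) atTop
            (𝓝 (∫ x, f x ∂ν))) →
        ∀ p : ℝ → Measure E,
          IsRCP P X (fun ω => Metric.infDist (X ω) C) p →
          ∀ f : E →ᵇ ℝ,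
            Tendsto
              (fun n => ∫ z, (∫ x, f x ∂(p z))
                ∂(xiLaw (P.map fun ω => Metric.infDist (X ω) C) n))
              atTop (𝓝 (∫ x, f x ∂ν))) := by
  set T : Ω → ℝ := fun ω => Metric.infDist (X ω) C with hTdef
  have hTm : Measurable T := (Metric.continuous_infDist_pt C).measurable.comp hX
  set μT : Measure ℝ := P.map T with hμT
  haveI : IsProbabilityMeasure μT := Measure.isProbabilityMeasure_map hTm.aemeasurable
  have hpre : ∀ r : ℝ, T ⁻¹' Set.Iio r = {ω | Metric.infDist (X ω) C < r} := fun r => rfl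
  have hcB : ∀ n : ℕ, μT (Set.Iio (1 / (n : ℝ))) = P {ω | Metric.infDist (X ω) C < 1 / (n : ℝ)} :=
    fun n => by rw [hμT, Measure.map_apply hTm measurableSet_Iio, hpre]
  have hcpos : ∀ n : ℕ, 1 ≤ n → 0 < μT (Set.Iio (1 / (n : ℝ))) := by
    intro n hn
    rw [hcB]
    exact hCpos _ (one_div_pos.mpr (by exact_mod_cast Nat.pos_of_ne_zero (by omega)))
  have hcne : ∀ n : ℕ, 1 ≤ n → μT (Set.Iio (1 / (n : ℝ))) ≠ ⊤ := fun n _ => measure_ne_top _ _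
  -- xiLaw is a probability measure for n ≥ 1
  haveI hxiprob : ∀ n : ℕ, 1 ≤ n → IsProbabilityMeasure (xiLaw μT n) := by
    intro n hn
    constructor
    rw [xiLaw, Measure.smul_apply, Measure.restrict_apply_univ, smul_eq_mul,
      ENNReal.inv_mul_cancel (hcpos n hn).ne' (hcne n hn)]
  -- a.e. z is in [0, 1/n) under xiLaw μT n
  have hae : ∀ n : ℕ, ∀ᵐ z ∂(xiLaw μT n), 0 ≤ z ∧ z < 1 / (n : ℝ) := by
    intro n
    apply Measure.ae_smul_measure
    have h1 : ∀ᵐ z ∂(μT.restrict (Set.Iio (1 / (n : ℝ)))), z < 1 / (n : ℝ) :=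
      ae_restrict_mem measurableSet_Iio
    have h2 : ∀ᵐ z ∂(μT.restrict (Set.Iio (1 / (n : ℝ)))), 0 ≤ z := by
      refine ae_mono Measure.restrict_le_self ?_
      show ∀ᵐ z ∂μT, 0 ≤ z
      rw [ae_iff]
      have : {z : ℝ | ¬ 0 ≤ z} = Set.Iio 0 := by ext z; simp [Set.mem_Iio, not_le]
      rw [this, hμT, Measure.map_apply hTm measurableSet_Iio]
      have : T ⁻¹' Set.Iio 0 = ∅ := by
        ext ω; simp [hTdef, not_lt.mpr Metric.infDist_nonneg]
      rw [this, measure_empty]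
    filter_upwards [h1, h2] with z hz1 hz2 using ⟨hz2, hz1⟩
  -- part (b) as a standalone fact
  have hb : ∀ p : ℝ → Measure E, IsRCP P X T p → ∀ n : ℕ, 1 ≤ n → ∀ f : E →ᵇ ℝ,
      ∫ z, (∫ x, f x ∂(p z)) ∂(xiLaw μT n) =
        (∫ ω in {ω | Metric.infDist (X ω) C < 1 / (n : ℝ)}, f (X ω) ∂P) /
          (P {ω | Metric.infDist (X ω) C < 1 / (n : ℝ)}).toReal := by
    intro p hrcp n hn f
    rw [xiLaw, integral_smul_measure,
      rcp_setIntegral P X hX T hTm p hrcp _ measurableSet_Iio f, hpre,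
      ENNReal.toReal_inv, hcB, smul_eq_mul, ← div_eq_inv_mul]
  refine ⟨?_, ?_, hb, ?_⟩
  · -- (B1)
    intro n hn
    intro s hs
    rw [xiLaw, Measure.smul_apply, smul_eq_mul]
    have h0 : μT.restrict (Set.Iio (1 / (n : ℝ))) s = 0 :=
      le_antisymm ((Measure.restrict_apply_le _ _).trans hs.le) zero_le
    rw [h0, mul_zero]
  · -- (B2)
    intro f
    rw [Metric.tendsto_atTop]
    intro ε hε
    obtain ⟨δ, hδ, hδ2⟩ := Metric.continuousAt_iff.mp f.continuous.continuousAt (ε := ε / 2)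
      (by linarith)
    obtain ⟨N, hN⟩ := exists_nat_one_div_lt hδ
    refine ⟨N + 1, fun n hn => ?_⟩
    have hn1 : 1 ≤ n := le_trans (by omega) hn
    haveI := hxiprob n hn1
    have hfin : ∫ z, (f 0 : ℝ) ∂(xiLaw μT n) = f 0 := by simp
    have key : ∫ z, f z ∂(xiLaw μT n) - f 0 = ∫ z, (f z - f 0) ∂(xiLaw μT n) := by
      rw [integral_sub (f.integrable _) (integrable_const _), hfin]
    rw [Real.dist_eq, key]
    have hbound : ∀ᵐ z ∂(xiLaw μT n), ‖f z - f 0‖ ≤ ε / 2 := by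
      filter_upwards [hae n] with z hz
      have hzδ : dist z 0 < δ := by
        rw [Real.dist_eq, sub_zero, abs_of_nonneg hz.1]
        calc z < 1 / (n : ℝ) := hz.2
          _ ≤ 1 / ((N : ℝ) + 1) := by
            apply one_div_le_one_div_of_le (by positivity)
            exact_mod_cast hn
          _ < δ := hN
      exact le_of_lt (hδ2 hzδ)
    calc |∫ z, (f z - f 0) ∂(xiLaw μT n)|
        ≤ ε / 2 * (xiLaw μT n Set.univ).toReal :=
          norm_integral_le_of_norm_le_const hbound
      _ = ε / 2 := by simp
      _ < ε := by linarith
  · -- (c)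
    intro ν hν hconv p hrcp f
    have hU : ∀ ε : ℝ, MeasurableSet {x : E | Metric.infDist x C < ε} := fun ε =>
      (isOpen_lt (Metric.continuous_infDist_pt C) continuous_const).measurableSet
    have heq : ∀ n : ℕ, 1 ≤ n → ∫ x, f x ∂(condLaw P X C (1 / (n : ℝ))) =
        ∫ z, (∫ x, f x ∂(p z)) ∂(xiLaw μT n) := by
      intro n hn
      rw [hb p hrcp n hn f, condLaw, integral_smul_measure,
        setIntegral_map (hU _) f.continuous.measurable.aestronglyMeasurable hX.aemeasurable,
        ENNReal.toReal_inv, smul_eq_mul, ← div_eq_inv_mul]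
      rfl
    have hcomp : Tendsto (fun n : ℕ => ∫ x, f x ∂(condLaw P X C (1 / ((n : ℕ) : ℝ))))
        atTop (𝓝 (∫ x, f x ∂ν)) := (hconv f).comp tendsto_natCast_atTop_atTop
    exact Tendsto.congr' (Filter.eventually_atTop.mpr ⟨1, fun n hn => heq n hn⟩) hcomp
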